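/- Let 0 < a < 1 and let ξ be as above with ℙ{ξ ≥ n} = Γ(a+n-1)/(Γ(a)Γ(n+1)). Then 𝔼ξ = 1/(1-a), and ∑_{k=1}^n k² ℙ{ξ = k} ∼ ((2-a)/Γ(a+1))·n^a as n → ∞. In particular the variance of ξ is infinite. -/

import Mathlib

open MeasureTheory Real Filter


noncomputable def Tl (a : ℝ) (n : ℕ) : ℝ :=
  Real.Gamma (a + n - 1) / (Real.Gamma a * Real.Gamma (n + 1))

noncomputable def Fs (a : ℝ) (k : ℕ) : ℝ :=
  (2 - a) / Real.Gamma a *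
    (((k : ℝ) ^ 2 / a + (2 * a - 1) * k / (a * (1 - a)) - 1 / (2 - a)) *
      Real.Gamma (a + k - 1) / Real.Gamma (k + 1))

noncomputable def Gs (a : ℝ) (k : ℕ) : ℝ :=
  (2 - a) / Real.Gamma a *
    (((k : ℝ) / (a - 1) + 1 / (2 - a)) * Real.Gamma (a + k - 1) / Real.Gamma (k + 1))

lemma step2 (a : ℝ) (ha : 0 < a) (ha1 : a < 1) (m : ℕ) :
    ((m + 1 : ℕ) : ℝ) ^ 2 * (Tl a (m + 1) - Tl a (m + 2)) = Fs a (m + 2) - Fs a (m + 1) := by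
  have ham : (0:ℝ) < a + m := by positivity
  have hm2 : ((m:ℝ) + 2) ≠ 0 := by positivity
  have hΓa : Real.Gamma a ≠ 0 := (Real.Gamma_pos_of_pos ha).ne'
  have hX : 0 < Real.Gamma (a + m) := Real.Gamma_pos_of_pos ham
  have hY : 0 < Real.Gamma ((m:ℝ) + 2) := Real.Gamma_pos_of_pos (by positivity)
  simp only [Tl, Fs]
  push_cast
  rw [show a + ((m:ℝ) + 1) - 1 = a + m by ring,
      show a + ((m:ℝ) + 2) - 1 = (a + m) + 1 by ring,
      show (m:ℝ) + 1 + 1 = (m:ℝ) + 2 by ring,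
      show (m:ℝ) + 2 + 1 = ((m:ℝ) + 2) + 1 by ring,
      Real.Gamma_add_one ham.ne', Real.Gamma_add_one hm2]
  have h1a : (1:ℝ) - a ≠ 0 := by linarith
  have h2a : (2:ℝ) - a ≠ 0 := by linarith
  field_simp
  ring

lemma step1 (a : ℝ) (ha : 0 < a) (ha1 : a < 1) (m : ℕ) :
    ((m + 1 : ℕ) : ℝ) * (Tl a (m + 1) - Tl a (m + 2)) = Gs a (m + 2) - Gs a (m + 1) := by
  have ham : (0:ℝ) < a + m := by positivity
  have hm2 : ((m:ℝ) + 2) ≠ 0 := by positivity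
  have hΓa : Real.Gamma a ≠ 0 := (Real.Gamma_pos_of_pos ha).ne'
  have hX : 0 < Real.Gamma (a + m) := Real.Gamma_pos_of_pos ham
  have hY : 0 < Real.Gamma ((m:ℝ) + 2) := Real.Gamma_pos_of_pos (by positivity)
  simp only [Tl, Gs]
  push_cast
  rw [show a + ((m:ℝ) + 1) - 1 = a + m by ring,
      show a + ((m:ℝ) + 2) - 1 = (a + m) + 1 by ring,
      show (m:ℝ) + 1 + 1 = (m:ℝ) + 2 by ring,
      show (m:ℝ) + 2 + 1 = ((m:ℝ) + 2) + 1 by ring,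
      Real.Gamma_add_one ham.ne', Real.Gamma_add_one hm2]
  have h1a : (1:ℝ) - a ≠ 0 := by linarith
  have h2a : (2:ℝ) - a ≠ 0 := by linarith
  have ha1' : a - 1 ≠ 0 := by linarith
  field_simp
  ring
open Real Filter

lemma Gamma_prod (a : ℝ) (ha : 0 < a) (n : ℕ) :
    Real.Gamma (a + n + 1) = Real.Gamma a * ∏ j ∈ Finset.range (n + 1), (a + j) := by
  induction n with
  | zero => simp [Real.Gamma_add_one ha.ne']; ring
  | succ n ih =>
    have h : (0:ℝ) < a + n + 1 := by positivity
    rw [show a + ((n+1:ℕ):ℝ) + 1 = (a + n + 1) + 1 by push_cast; ring,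
        Real.Gamma_add_one h.ne', ih]
    conv_rhs => rw [Finset.prod_range_succ]
    push_cast
    ring

lemma gammaSeq_mul (a : ℝ) (ha : 0 < a) (n : ℕ) :
    Real.GammaSeq a n * Real.Gamma (a + n + 1)
      = (n : ℝ) ^ a * n.factorial * Real.Gamma a := by
  have hp : (0:ℝ) < ∏ j ∈ Finset.range (n + 1), (a + j) :=
    Finset.prod_pos fun j _ => by positivity
  rw [Real.GammaSeq, Gamma_prod a ha n]
  field_simp

lemma gammaSeq_pos (a : ℝ) (ha : 0 < a) {n : ℕ} (hn : 1 ≤ n) : 0 < Real.GammaSeq a n := by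
  have hp : (0:ℝ) < ∏ j ∈ Finset.range (n + 1), (a + j) :=
    Finset.prod_pos fun j _ => by positivity
  have hn' : (0:ℝ) < (n:ℝ) := by exact_mod_cast hn
  rw [Real.GammaSeq]
  positivity

/-- `Γ(a+n) = n^a n! Γ(a) / ((a+n) GammaSeq a n)` for `n ≥ 1`. -/
lemma Gamma_eq (a : ℝ) (ha : 0 < a) {n : ℕ} (hn : 1 ≤ n) :
    Real.Gamma (a + n) =
      (n : ℝ) ^ a * n.factorial * Real.Gamma a / ((a + n) * Real.GammaSeq a n) := by
  have ham : (0:ℝ) < a + n := by positivity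
  have h1 := gammaSeq_mul a ha n
  rw [show a + (n:ℝ) + 1 = (a + n) + 1 by ring, Real.Gamma_add_one ham.ne'] at h1
  have hgs := gammaSeq_pos a ha hn
  field_simp
  linarith [h1]
open Real Filter
section
variable (a : ℝ)

lemma tendsto_inv_an (ha : 0 < a) :
    Tendsto (fun n : ℕ => (a + (n:ℝ))⁻¹) atTop (nhds 0) :=
  Tendsto.inv_tendsto_atTop (tendsto_atTop_add_const_left _ a tendsto_natCast_atTop_atTop)

lemma tendsto_inv_n1 :
    Tendsto (fun n : ℕ => ((n:ℝ) + 1)⁻¹) atTop (nhds 0) :=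
  Tendsto.inv_tendsto_atTop (tendsto_atTop_add_const_right _ 1 tendsto_natCast_atTop_atTop)

lemma tendsto_ratio1 (ha : 0 < a) :
    Tendsto (fun n : ℕ => ((n:ℝ) + 1) / (a + n)) atTop (nhds 1) := by
  have h : ∀ n : ℕ, ((n:ℝ) + 1) / (a + n) = 1 + (1 - a) * (a + (n:ℝ))⁻¹ := by
    intro n
    have h0 : a + (n:ℝ) ≠ 0 := by positivity
    field_simp
    ring
  simp_rw [h]
  have := ((tendsto_inv_an a ha).const_mul (1 - a)).const_add 1
  simpa using this

lemma tendsto_ratio2 (ha : 0 < a) :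
    Tendsto (fun n : ℕ => (n:ℝ) / (a + n)) atTop (nhds 1) := by
  have h : ∀ n : ℕ, (n:ℝ) / (a + n) = 1 - a * (a + (n:ℝ))⁻¹ := by
    intro n
    have h0 : a + (n:ℝ) ≠ 0 := by positivity
    field_simp
    ring
  simp_rw [h]
  have := (tendsto_const_nhds (x := (1:ℝ))).sub ((tendsto_inv_an a ha).const_mul a)
  simpa using this

lemma tendsto_rpow_am1 (ha1 : a < 1) :
    Tendsto (fun n : ℕ => (n:ℝ) ^ (a - 1)) atTop (nhds 0) := by
  have h := (tendsto_rpow_neg_atTop (y := 1 - a) (by linarith)).comp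
    (tendsto_natCast_atTop_atTop (R := ℝ))
  simpa [Function.comp_def, neg_sub] using h

lemma tendsto_rpow_inv (ha : 0 < a) :
    Tendsto (fun n : ℕ => ((n:ℝ) ^ a)⁻¹) atTop (nhds 0) :=
  Tendsto.inv_tendsto_atTop ((tendsto_rpow_atTop ha).comp (tendsto_natCast_atTop_atTop (R := ℝ)))
end

section
variable {a : ℝ}

lemma Fs_ratio (ha : 0 < a) (ha1 : a < 1) {n : ℕ} (hn : 1 ≤ n) :
    Fs a (n + 1) / ((2 - a) / Real.Gamma (a + 1) * (n:ℝ) ^ a) =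
      Real.Gamma (a + 1) *
        ((((n:ℝ) + 1) ^ 2 / a + (2 * a - 1) * ((n:ℝ) + 1) / (a * (1 - a)) - 1 / (2 - a)) /
          ((a + n) * ((n:ℝ) + 1))) * (Real.GammaSeq a n)⁻¹ := by
  have hn0 : (0:ℝ) < (n:ℝ) := by exact_mod_cast hn
  have hra : (0:ℝ) < (n:ℝ) ^ a := Real.rpow_pos_of_pos hn0 a
  have hfac : (0:ℝ) < (n.factorial : ℝ) := by exact_mod_cast n.factorial_pos
  have hgs := gammaSeq_pos a ha hn
  have ham : (0:ℝ) < a + n := by positivity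
  have hΓa : (0:ℝ) < Real.Gamma a := Real.Gamma_pos_of_pos ha
  have h2a : (2:ℝ) - a ≠ 0 := by linarith
  have h1a : (1:ℝ) - a ≠ 0 := by linarith
  rw [Fs, show a + ((n + 1 : ℕ) : ℝ) - 1 = a + n by push_cast; ring,
      show (((n + 1 : ℕ) : ℝ) + 1) = ((n + 1 : ℕ) : ℝ) + 1 from rfl,
      Gamma_eq a ha hn,
      show Real.Gamma (((n + 1 : ℕ) : ℝ) + 1) = ((n + 1).factorial : ℝ) from
        Real.Gamma_nat_eq_factorial (n + 1),
      Real.Gamma_add_one ha.ne']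
  have hfac2 : ((n + 1).factorial : ℝ) = ((n:ℝ) + 1) * n.factorial := by
    push_cast [Nat.factorial_succ]; ring
  rw [hfac2]
  push_cast
  field_simp

lemma Gs_ratio (ha : 0 < a) (ha1 : a < 1) {n : ℕ} (hn : 1 ≤ n) :
    Gs a (n + 1) =
      (2 - a) * ((n:ℝ) * (((n:ℝ) + 1) / (a - 1) + 1 / (2 - a)) / ((a + n) * ((n:ℝ) + 1))) *
        (Real.GammaSeq a n)⁻¹ * (n:ℝ) ^ (a - 1) := by
  have hn0 : (0:ℝ) < (n:ℝ) := by exact_mod_cast hn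
  have hra : (0:ℝ) < (n:ℝ) ^ a := Real.rpow_pos_of_pos hn0 a
  have hfac : (0:ℝ) < (n.factorial : ℝ) := by exact_mod_cast n.factorial_pos
  have hgs := gammaSeq_pos a ha hn
  have ham : (0:ℝ) < a + n := by positivity
  have hΓa : (0:ℝ) < Real.Gamma a := Real.Gamma_pos_of_pos ha
  have h2a : (2:ℝ) - a ≠ 0 := by linarith
  have ha1' : a - 1 ≠ 0 := by linarith
  have hpow : (n:ℝ) ^ a = (n:ℝ) ^ (a - 1) * (n:ℝ) := by
    have h := Real.rpow_add hn0 (a - 1) 1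
    rw [Real.rpow_one] at h
    rw [← h]
    norm_num
  rw [Gs, show a + ((n + 1 : ℕ) : ℝ) - 1 = a + n by push_cast; ring,
      Gamma_eq a ha hn,
      show Real.Gamma (((n + 1 : ℕ) : ℝ) + 1) = ((n + 1).factorial : ℝ) from
        Real.Gamma_nat_eq_factorial (n + 1)]
  have hfac2 : ((n + 1).factorial : ℝ) = ((n:ℝ) + 1) * n.factorial := by
    push_cast [Nat.factorial_succ]; ring
  rw [hfac2, hpow]
  push_cast
  field_simp

lemma tendsto_Fs_ratio (ha : 0 < a) (ha1 : a < 1) :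
    Tendsto (fun n : ℕ => (Fs a (n + 1) - Fs a 1) /
      ((2 - a) / Real.Gamma (a + 1) * (n:ℝ) ^ a)) atTop (nhds 1) := by
  have hΓa : (0:ℝ) < Real.Gamma a := Real.Gamma_pos_of_pos ha
  have h2a : (2:ℝ) - a ≠ 0 := by linarith
  have h1a : (1:ℝ) - a ≠ 0 := by linarith
  -- the quadratic-quotient part tends to 1/a
  have hquot : Tendsto (fun n : ℕ =>
      (((n:ℝ) + 1) ^ 2 / a + (2 * a - 1) * ((n:ℝ) + 1) / (a * (1 - a)) - 1 / (2 - a)) /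
        ((a + n) * ((n:ℝ) + 1))) atTop (nhds (1 / a)) := by
    have heq : ∀ n : ℕ,
        (((n:ℝ) + 1) ^ 2 / a + (2 * a - 1) * ((n:ℝ) + 1) / (a * (1 - a)) - 1 / (2 - a)) /
          ((a + n) * ((n:ℝ) + 1))
        = (1 / a) * (((n:ℝ) + 1) / (a + n)) + ((2 * a - 1) / (a * (1 - a))) * (a + (n:ℝ))⁻¹
            - (1 / (2 - a)) * ((a + (n:ℝ))⁻¹ * ((n:ℝ) + 1)⁻¹) := by
      intro n
      have h0 : a + (n:ℝ) ≠ 0 := by positivity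
      have h1 : (n:ℝ) + 1 ≠ 0 := by positivity
      field_simp
    simp_rw [heq]
    have h := (((tendsto_ratio1 a ha).const_mul (1 / a)).add
        ((tendsto_inv_an a ha).const_mul ((2 * a - 1) / (a * (1 - a))))).sub
      (((tendsto_inv_an a ha).mul (tendsto_inv_n1)).const_mul (1 / (2 - a)))
    simpa using h
  have hGS : Tendsto (fun n : ℕ => (Real.GammaSeq a n)⁻¹) atTop (nhds (Real.Gamma a)⁻¹) :=
    (Real.GammaSeq_tendsto_Gamma a).inv₀ hΓa.ne'
  have hmain : Tendsto (fun n : ℕ =>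
      Real.Gamma (a + 1) *
        ((((n:ℝ) + 1) ^ 2 / a + (2 * a - 1) * ((n:ℝ) + 1) / (a * (1 - a)) - 1 / (2 - a)) /
          ((a + n) * ((n:ℝ) + 1))) * (Real.GammaSeq a n)⁻¹) atTop
      (nhds (Real.Gamma (a + 1) * (1 / a) * (Real.Gamma a)⁻¹)) :=
    ((hquot.const_mul _).mul hGS)
  have hval : Real.Gamma (a + 1) * (1 / a) * (Real.Gamma a)⁻¹ = 1 := by
    rw [Real.Gamma_add_one ha.ne']
    field_simp
  rw [hval] at hmain
  have hzero : Tendsto (fun n : ℕ =>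
      Fs a 1 * Real.Gamma (a + 1) / (2 - a) * ((n:ℝ) ^ a)⁻¹) atTop (nhds 0) := by
    have := (tendsto_rpow_inv a ha).const_mul (Fs a 1 * Real.Gamma (a + 1) / (2 - a))
    simpa using this
  have hcomb := hmain.sub hzero
  rw [sub_zero] at hcomb
  refine hcomb.congr' ?_
  filter_upwards [eventually_ge_atTop 1] with n hn
  have hn0 : (0:ℝ) < (n:ℝ) := by exact_mod_cast hn
  have hra : (0:ℝ) < (n:ℝ) ^ a := Real.rpow_pos_of_pos hn0 a
  have hΓa1 : (0:ℝ) < Real.Gamma (a + 1) := Real.Gamma_pos_of_pos (by linarith)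
  have hd : (2 - a) / Real.Gamma (a + 1) * (n:ℝ) ^ a ≠ 0 := by
    apply mul_ne_zero (div_ne_zero h2a hΓa1.ne') hra.ne'
  conv_rhs => rw [sub_div]
  rw [Fs_ratio ha ha1 hn]
  congr 1
  field_simp [h2a, hΓa1.ne', hra.ne']

lemma tendsto_Gs (ha : 0 < a) (ha1 : a < 1) :
    Tendsto (fun n : ℕ => Gs a (n + 1)) atTop (nhds 0) := by
  have hΓa : (0:ℝ) < Real.Gamma a := Real.Gamma_pos_of_pos ha
  have h2a : (2:ℝ) - a ≠ 0 := by linarith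
  have ha1' : a - 1 ≠ 0 := by linarith
  have hquot : Tendsto (fun n : ℕ =>
      (n:ℝ) * (((n:ℝ) + 1) / (a - 1) + 1 / (2 - a)) / ((a + n) * ((n:ℝ) + 1)))
      atTop (nhds (1 / (a - 1))) := by
    have heq : ∀ n : ℕ,
        (n:ℝ) * (((n:ℝ) + 1) / (a - 1) + 1 / (2 - a)) / ((a + n) * ((n:ℝ) + 1))
        = (1 / (a - 1)) * ((n:ℝ) / (a + n))
            + (1 / (2 - a)) * (((n:ℝ) / (a + n)) * ((n:ℝ) + 1)⁻¹) := by
      intro n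
      have h0 : a + (n:ℝ) ≠ 0 := by positivity
      have h1 : (n:ℝ) + 1 ≠ 0 := by positivity
      field_simp
    simp_rw [heq]
    have h := ((tendsto_ratio2 a ha).const_mul (1 / (a - 1))).add
      (((tendsto_ratio2 a ha).mul tendsto_inv_n1).const_mul (1 / (2 - a)))
    simpa using h
  have hGS : Tendsto (fun n : ℕ => (Real.GammaSeq a n)⁻¹) atTop (nhds (Real.Gamma a)⁻¹) :=
    (Real.GammaSeq_tendsto_Gamma a).inv₀ hΓa.ne'
  have hmain := (((hquot.const_mul (2 - a)).mul hGS).mul (tendsto_rpow_am1 a ha1))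
  rw [mul_zero] at hmain
  refine hmain.congr' ?_
  filter_upwards [eventually_ge_atTop 1] with n hn
  exact (Gs_ratio ha ha1 hn).symm
end


/-- For `0 < a < 1` and a positive-integer valued random variable `ξ` with tail
`ℙ{ξ ≥ n} = Γ(a+n-1)/(Γ(a)Γ(n+1))`: the mean is `1/(1-a)`, the truncated second
moments satisfy `∑_{k=1}^n k² ℙ{ξ=k} ∼ ((2-a)/Γ(a+1))·n^a`, and the variance is
infinite (the full second moment series diverges). -/
theorem beta_coalescent_moments {Ω : Type*} [MeasurableSpace Ω] (μ : Measure Ω)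
    [IsProbabilityMeasure μ] (a : ℝ) (ha : 0 < a) (ha1 : a < 1)
    (ξ : Ω → ℕ) (hmeas : Measurable ξ) (hpos : ∀ ω, 1 ≤ ξ ω)
    (htail : ∀ n : ℕ, 1 ≤ n →
      μ {ω | n ≤ ξ ω} =
        ENNReal.ofReal (Real.Gamma (a + n - 1) / (Real.Gamma a * Real.Gamma (n + 1)))) :
    (∑' k : ℕ, (k : ℝ) * (μ {ω | ξ ω = k}).toReal = 1 / (1 - a)) ∧
    Tendsto (fun n : ℕ =>
        (∑ k ∈ Finset.range (n + 1), (k : ℝ) ^ 2 * (μ {ω | ξ ω = k}).toReal)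
          / ((2 - a) / Real.Gamma (a + 1) * (n : ℝ) ^ a)) atTop (nhds 1) ∧
    ¬ Summable (fun k : ℕ => (k : ℝ) ^ 2 * (μ {ω | ξ ω = k}).toReal) := by
  have hΓa : (0:ℝ) < Real.Gamma a := Real.Gamma_pos_of_pos ha
  have h1a : (1:ℝ) - a ≠ 0 := by linarith
  have ha1' : a - 1 ≠ 0 := by linarith
  -- tail values
  have hT : ∀ k : ℕ, 1 ≤ k → (μ {ω | k ≤ ξ ω}).toReal = Tl a k := by
    intro k hk
    have hk' : (1:ℝ) ≤ (k:ℝ) := by exact_mod_cast hk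
    have h1 : (0:ℝ) < Real.Gamma (a + k - 1) := Real.Gamma_pos_of_pos (by linarith)
    have h2 : (0:ℝ) < Real.Gamma ((k:ℝ) + 1) := Real.Gamma_pos_of_pos (by linarith)
    rw [htail k hk, ENNReal.toReal_ofReal (by positivity)]
    rfl
  -- point probabilities
  have hμ : ∀ k : ℕ, 1 ≤ k → (μ {ω | ξ ω = k}).toReal = Tl a k - Tl a (k + 1) := by
    intro k hk
    have hset : {ω | k ≤ ξ ω} = {ω | ξ ω = k} ∪ {ω | k + 1 ≤ ξ ω} := by
      ext ω; simp only [Set.mem_setOf_eq, Set.mem_union]; omega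
    have hd : Disjoint {ω | ξ ω = k} {ω | k + 1 ≤ ξ ω} := by
      rw [Set.disjoint_left]
      intro ω h1 h2
      simp only [Set.mem_setOf_eq] at h1 h2
      omega
    have hm2 : MeasurableSet {ω | k + 1 ≤ ξ ω} := hmeas measurableSet_Ici
    have hadd : μ {ω | k ≤ ξ ω} = μ {ω | ξ ω = k} + μ {ω | k + 1 ≤ ξ ω} := by
      rw [hset, measure_union hd hm2]
    have htr : (μ {ω | k ≤ ξ ω}).toReal
        = (μ {ω | ξ ω = k}).toReal + (μ {ω | k + 1 ≤ ξ ω}).toReal := by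
      rw [hadd, ENNReal.toReal_add (measure_ne_top _ _) (measure_ne_top _ _)]
    have e1 := hT k hk
    have e2 := hT (k + 1) (by omega)
    linarith [htr]
  -- partial sums of second moments
  have hg : ∀ n : ℕ, ∑ k ∈ Finset.range (n + 1), (k:ℝ) ^ 2 * (μ {ω | ξ ω = k}).toReal
      = Fs a (n + 1) - Fs a 1 := by
    intro n
    induction n with
    | zero => simp
    | succ n ih =>
      rw [Finset.sum_range_succ, ih, hμ (n + 1) (by omega), step2 a ha ha1 n]
      ring
  -- partial sums of first moments
  have hf : ∀ n : ℕ, ∑ k ∈ Finset.range (n + 1), (k:ℝ) * (μ {ω | ξ ω = k}).toReal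
      = Gs a (n + 1) - Gs a 1 := by
    intro n
    induction n with
    | zero => simp
    | succ n ih =>
      rw [Finset.sum_range_succ, ih, hμ (n + 1) (by omega), step1 a ha ha1 n]
      ring
  -- second moment ratio limit
  have goal2 : Tendsto (fun n : ℕ =>
      (∑ k ∈ Finset.range (n + 1), (k : ℝ) ^ 2 * (μ {ω | ξ ω = k}).toReal)
        / ((2 - a) / Real.Gamma (a + 1) * (n : ℝ) ^ a)) atTop (nhds 1) := by
    refine (tendsto_Fs_ratio ha ha1).congr fun n => ?_
    rw [hg n]
  refine ⟨?_, goal2, ?_⟩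
  · -- mean
    have hGs1 : Gs a 1 = 1 / (a - 1) := by
      have h2a : (2:ℝ) - a ≠ 0 := by linarith
      rw [Gs]
      push_cast
      rw [show a + 1 - 1 = a by ring, show (1:ℝ) + 1 = 2 by norm_num, Real.Gamma_two]
      field_simp
      ring
    have hlim : Tendsto (fun n : ℕ =>
        ∑ k ∈ Finset.range (n + 1), (k:ℝ) * (μ {ω | ξ ω = k}).toReal) atTop
        (nhds (1 / (1 - a))) := by
      have h := (tendsto_Gs ha ha1).sub_const (Gs a 1)
      have hv : (0:ℝ) - Gs a 1 = 1 / (1 - a) := by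
        rw [hGs1]
        field_simp
        ring
      rw [hv] at h
      exact h.congr fun n => (hf n).symm
    have hnonneg : ∀ k : ℕ, 0 ≤ (k:ℝ) * (μ {ω | ξ ω = k}).toReal :=
      fun k => mul_nonneg (Nat.cast_nonneg k) ENNReal.toReal_nonneg
    have hhs : HasSum (fun k : ℕ => (k:ℝ) * (μ {ω | ξ ω = k}).toReal) (1 / (1 - a)) := by
      rw [hasSum_iff_tendsto_nat_of_nonneg hnonneg]
      exact (tendsto_add_atTop_iff_nat 1).mp hlim
    exact hhs.tsum_eq
  · -- not summable
    intro hs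
    have hΓa1 : (0:ℝ) < Real.Gamma (a + 1) := Real.Gamma_pos_of_pos (by linarith)
    have hc : (0:ℝ) < (2 - a) / Real.Gamma (a + 1) := by
      apply div_pos (by linarith) hΓa1
    have hat : Tendsto (fun n : ℕ => (2 - a) / Real.Gamma (a + 1) * (n:ℝ) ^ a) atTop atTop :=
      Tendsto.const_mul_atTop hc
        ((tendsto_rpow_atTop ha).comp (tendsto_natCast_atTop_atTop (R := ℝ)))
    have htop : Tendsto (fun n : ℕ =>
        ∑ k ∈ Finset.range (n + 1), (k:ℝ) ^ 2 * (μ {ω | ξ ω = k}).toReal) atTop atTop := by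
      refine (goal2.pos_mul_atTop one_pos hat).congr' ?_
      filter_upwards [eventually_ge_atTop 1] with n hn
      have hn0 : (0:ℝ) < (n:ℝ) := by exact_mod_cast hn
      have hra : (0:ℝ) < (n:ℝ) ^ a := Real.rpow_pos_of_pos hn0 a
      exact div_mul_cancel₀ _ (by positivity)
    have hnhds : Tendsto (fun n : ℕ =>
        ∑ k ∈ Finset.range (n + 1), (k:ℝ) ^ 2 * (μ {ω | ξ ω = k}).toReal) atTop
        (nhds (∑' k : ℕ, (k:ℝ) ^ 2 * (μ {ω | ξ ω = k}).toReal)) :=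
      (tendsto_add_atTop_iff_nat 1).mpr hs.hasSum.tendsto_sum_nat
    exact not_tendsto_atTop_of_tendsto_nhds hnhds htop
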